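/- Let S = K[x_1,...,x_n] and let J ⊆ S be a saturated strongly stable monomial ideal. Writing S̄ = K[x_1,...,x_{n-1}] and J̄ = J ∩ S̄, one has dim_K J_d = Σ_{k=0}^{d} dim_K J̄_k for all d ≥ 0. -/

import Mathlib

open MvPolynomial

def IsMonomialIdeal {n : ℕ} {K : Type} [Field K] (J : Ideal (MvPolynomial (Fin n) K)) : Prop :=
  ∀ f ∈ J, ∀ m ∈ f.support, (monomial m (1 : K) : MvPolynomial (Fin n) K) ∈ J

def StronglyStable {n : ℕ} {K : Type} [Field K] (J : Ideal (MvPolynomial (Fin n) K)) : Prop :=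
  IsMonomialIdeal J ∧
  ∀ m : Fin n →₀ ℕ, (monomial m (1 : K) : MvPolynomial (Fin n) K) ∈ J →
    ∀ j i : Fin n, i < j → m j ≠ 0 →
      (monomial (m - Finsupp.single j 1 + Finsupp.single i 1) (1 : K) : MvPolynomial (Fin n) K) ∈ J

def Saturated {n : ℕ} {K : Type} [Field K] (J : Ideal (MvPolynomial (Fin n) K)) : Prop :=
  ∀ f : MvPolynomial (Fin n) K, (∃ k : ℕ, ∀ i : Fin n, (X i) ^ k * f ∈ J) → f ∈ J

/-- The degree-`d` graded piece `J_d` of an ideal, as a `K`-subspace. -/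
noncomputable def gradedPiece {n : ℕ} {K : Type} [Field K] (J : Ideal (MvPolynomial (Fin n) K))
    (d : ℕ) : Submodule K (MvPolynomial (Fin n) K) :=
  (Submodule.restrictScalars K J) ⊓ homogeneousSubmodule (Fin n) K d

/-- The degree-`k` graded piece of `J̄ = J ∩ K[x_1,…,x_n]` (polynomials of `J` supported away
from the last variable), as a `K`-subspace. -/
noncomputable def gradedPieceBar {n : ℕ} {K : Type} [Field K]
    (J : Ideal (MvPolynomial (Fin (n + 1)) K)) (k : ℕ) :
    Submodule K (MvPolynomial (Fin (n + 1)) K) :=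
  (Submodule.restrictScalars K J) ⊓ homogeneousSubmodule (Fin (n + 1)) K k ⊓
    (MvPolynomial.supported K {i : Fin (n + 1) | i ≠ Fin.last n}).toSubmodule

namespace StmtAux

variable {n : ℕ} {K : Type} [Field K]

/-- Exponents of degree-`d` monomials in `J`. -/
def SdSet (J : Ideal (MvPolynomial (Fin (n + 1)) K)) (d : ℕ) : Set (Fin (n + 1) →₀ ℕ) :=
  {m | m.degree = d ∧ (monomial m (1 : K) : MvPolynomial (Fin (n + 1)) K) ∈ J}

/-- Exponents of degree-`k` monomials in `J̄`. -/
def BkSet (J : Ideal (MvPolynomial (Fin (n + 1)) K)) (k : ℕ) : Set (Fin (n + 1) →₀ ℕ) :=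
  {m | m.degree = k ∧ m (Fin.last n) = 0 ∧
    (monomial m (1 : K) : MvPolynomial (Fin (n + 1)) K) ∈ J}

lemma degree_single (a : Fin (n + 1)) (e : ℕ) : (Finsupp.single a e).degree = e := by
  rcases eq_or_ne e 0 with h | h
  · simp [h]
  · exact Finsupp.degree_single a e

lemma degree_add (f g : Fin (n + 1) →₀ ℕ) : (f + g).degree = f.degree + g.degree := by
  simp only [Finsupp.degree_eq_weight_one]
  exact map_add _ _ _

lemma shift_mem {J : Ideal (MvPolynomial (Fin (n + 1)) K)} (hSS : StronglyStable J)
    (m : Fin (n + 1) →₀ ℕ) (i : Fin (n + 1)) (hi : i < Fin.last n) (e : ℕ)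
    (h : (monomial (m + Finsupp.single (Fin.last n) e) (1 : K) :
      MvPolynomial (Fin (n + 1)) K) ∈ J) :
    ∀ t ≤ e, (monomial (m + Finsupp.single i t + Finsupp.single (Fin.last n) (e - t)) (1 : K) :
      MvPolynomial (Fin (n + 1)) K) ∈ J := by
  intro t
  induction t with
  | zero => intro _; simpa using h
  | succ t ih =>
    intro ht
    have h1 := ih (Nat.le_of_succ_le ht)
    have hne : i ≠ Fin.last n := ne_of_lt hi
    have hlast : (m + Finsupp.single i t + Finsupp.single (Fin.last n) (e - t)) (Fin.last n) ≠ 0 := by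
      have h0 : Finsupp.single i t (Fin.last n) = 0 := Finsupp.single_eq_of_ne' hne
      simp only [Finsupp.add_apply, h0, Finsupp.single_eq_same, add_zero]
      omega
    have h2 := hSS.2 _ h1 (Fin.last n) i hi hlast
    have heq : (m + Finsupp.single i t + Finsupp.single (Fin.last n) (e - t))
        - Finsupp.single (Fin.last n) 1 + Finsupp.single i 1
        = m + Finsupp.single i (t + 1) + Finsupp.single (Fin.last n) (e - (t + 1)) := by
      ext a
      simp only [Finsupp.coe_add, Finsupp.coe_tsub, Pi.add_apply, Pi.sub_apply,
        Finsupp.single_apply]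
      by_cases h1 : Fin.last n = a
      · have h2 : ¬ i = a := by rintro rfl; exact hne h1.symm
        simp only [if_pos h1, if_neg h2]
        omega
      · by_cases h2 : i = a
        · simp only [if_neg h1, if_pos h2]
          omega
        · simp only [if_neg h1, if_neg h2]
          omega
    rwa [heq] at h2

lemma bar_mem {J : Ideal (MvPolynomial (Fin (n + 1)) K)} (hSS : StronglyStable J)
    (hSat : Saturated J) (m : Fin (n + 1) →₀ ℕ) (e : ℕ)
    (h : (monomial (m + Finsupp.single (Fin.last n) e) (1 : K) :
      MvPolynomial (Fin (n + 1)) K) ∈ J) :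
    (monomial m (1 : K) : MvPolynomial (Fin (n + 1)) K) ∈ J := by
  apply hSat
  refine ⟨e, fun i => ?_⟩
  rw [X_pow_eq_monomial, monomial_mul, one_mul, add_comm (Finsupp.single i e) m]
  rcases eq_or_ne i (Fin.last n) with rfl | hiL
  · exact h
  · have hi : i < Fin.last n := Fin.lt_last_iff_ne_last.mpr hiL
    have := shift_mem hSS m i hi e h e le_rfl
    simpa using this

lemma mem_of_bar {J : Ideal (MvPolynomial (Fin (n + 1)) K)} (m : Fin (n + 1) →₀ ℕ) (e : ℕ)
    (h : (monomial m (1 : K) : MvPolynomial (Fin (n + 1)) K) ∈ J) :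
    (monomial (m + Finsupp.single (Fin.last n) e) (1 : K) :
      MvPolynomial (Fin (n + 1)) K) ∈ J := by
  have := Ideal.mul_mem_right (monomial (Finsupp.single (Fin.last n) e) (1 : K)) _ h
  rwa [monomial_mul, one_mul] at this

lemma gradedPiece_eq (J : Ideal (MvPolynomial (Fin (n + 1)) K)) (hJ : IsMonomialIdeal J)
    (d : ℕ) :
    gradedPiece J d
      = Submodule.span K ((fun m => (monomial m (1 : K) : MvPolynomial (Fin (n + 1)) K)) ''
          SdSet J d) := by
  apply le_antisymm
  · intro f hf
    rw [gradedPiece, Submodule.mem_inf] at hf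
    obtain ⟨hfJ, hfh⟩ := hf
    rw [Submodule.restrictScalars_mem] at hfJ
    rw [mem_homogeneousSubmodule] at hfh
    nth_rw 1 [f.as_sum]
    apply Submodule.sum_mem
    intro m hm
    have h1 : (monomial m (1 : K) : MvPolynomial (Fin (n + 1)) K) ∈ J := hJ f hfJ m hm
    have h2 : m.degree = d := by
      rw [Finsupp.degree_eq_weight_one]
      exact hfh (mem_support_iff.mp hm)
    have h3 : (monomial m (coeff m f) : MvPolynomial (Fin (n + 1)) K)
        = (coeff m f) • monomial m (1 : K) := by
      rw [smul_monomial, smul_eq_mul, mul_one]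
    rw [h3]
    exact Submodule.smul_mem _ _ (Submodule.subset_span ⟨m, ⟨h2, h1⟩, rfl⟩)
  · rw [Submodule.span_le]
    rintro _ ⟨m, ⟨hdeg, hmem⟩, rfl⟩
    rw [SetLike.mem_coe, gradedPiece, Submodule.mem_inf]
    exact ⟨hmem, (mem_homogeneousSubmodule _ _).mpr (isHomogeneous_monomial _ hdeg)⟩

lemma gradedPieceBar_eq (J : Ideal (MvPolynomial (Fin (n + 1)) K)) (hJ : IsMonomialIdeal J)
    (k : ℕ) :
    gradedPieceBar J k
      = Submodule.span K ((fun m => (monomial m (1 : K) : MvPolynomial (Fin (n + 1)) K)) ''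
          BkSet J k) := by
  apply le_antisymm
  · intro f hf
    rw [gradedPieceBar, Submodule.mem_inf, Submodule.mem_inf] at hf
    obtain ⟨⟨hfJ, hfh⟩, hfs⟩ := hf
    rw [Submodule.restrictScalars_mem] at hfJ
    rw [mem_homogeneousSubmodule] at hfh
    rw [Subalgebra.mem_toSubmodule, mem_supported] at hfs
    nth_rw 1 [f.as_sum]
    apply Submodule.sum_mem
    intro m hm
    have h1 : (monomial m (1 : K) : MvPolynomial (Fin (n + 1)) K) ∈ J := hJ f hfJ m hm
    have h2 : m.degree = k := by
      rw [Finsupp.degree_eq_weight_one]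
      exact hfh (mem_support_iff.mp hm)
    have h4 : m (Fin.last n) = 0 := by
      by_contra hc
      have : Fin.last n ∈ f.vars := (mem_vars _).mpr ⟨m, hm, Finsupp.mem_support_iff.mpr hc⟩
      exact absurd rfl (hfs this)
    have h3 : (monomial m (coeff m f) : MvPolynomial (Fin (n + 1)) K)
        = (coeff m f) • monomial m (1 : K) := by
      rw [smul_monomial, smul_eq_mul, mul_one]
    rw [h3]
    exact Submodule.smul_mem _ _ (Submodule.subset_span ⟨m, ⟨h2, h4, h1⟩, rfl⟩)
  · rw [Submodule.span_le]
    rintro _ ⟨m, ⟨hdeg, hL, hmem⟩, rfl⟩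
    rw [SetLike.mem_coe, gradedPieceBar, Submodule.mem_inf, Submodule.mem_inf]
    refine ⟨⟨hmem, (mem_homogeneousSubmodule _ _).mpr (isHomogeneous_monomial _ hdeg)⟩, ?_⟩
    rw [Subalgebra.mem_toSubmodule, mem_supported, vars_monomial (one_ne_zero)]
    intro i hi
    simp only [Set.mem_setOf_eq]
    rintro rfl
    exact absurd hL (Finsupp.mem_support_iff.mp hi)

set_option maxHeartbeats 1000000 in
lemma finrank_span_monomials (s : Set (Fin (n + 1) →₀ ℕ)) (hs : s.Finite) :
    Module.finrank K (Submodule.span K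
      ((fun m => (monomial m (1 : K) : MvPolynomial (Fin (n + 1)) K)) '' s)) = s.ncard := by
  classical
  have hinj : Function.Injective
      (fun m : Fin (n + 1) →₀ ℕ => (monomial m (1 : K) : MvPolynomial (Fin (n + 1)) K)) :=
    monomial_left_injective one_ne_zero
  have hfin : ((fun m => (monomial m (1 : K) : MvPolynomial (Fin (n + 1)) K)) '' s).Finite :=
    hs.image _
  have i1 := hfin.fintype
  have hli : LinearIndependent K
      ((↑) : ((fun m => (monomial m (1 : K) : MvPolynomial (Fin (n + 1)) K)) '' s)
        → MvPolynomial (Fin (n + 1)) K) := by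
    have hb := (basisMonomials (Fin (n + 1)) K).linearIndependent
    have h2 : LinearIndependent K
        (fun x : s => (monomial (x : Fin (n + 1) →₀ ℕ) (1 : K) :
          MvPolynomial (Fin (n + 1)) K)) := by
      have := hb.comp ((↑) : s → (Fin (n + 1) →₀ ℕ)) Subtype.val_injective
      simpa [coe_basisMonomials, Function.comp_def] using this
    rw [Set.image_eq_range]; exact h2.linearIndepOn_id
  rw [finrank_span_set_eq_card hli, ← Set.ncard_eq_toFinset_card',
    Set.ncard_image_of_injective s hinj]

lemma sd_finite (J : Ideal (MvPolynomial (Fin (n + 1)) K)) (d : ℕ) : (SdSet J d).Finite :=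
  (Finsupp.finite_of_degree_le d).subset fun m hm => le_of_eq hm.1

lemma bk_finite (J : Ideal (MvPolynomial (Fin (n + 1)) K)) (k : ℕ) : (BkSet J k).Finite :=
  (Finsupp.finite_of_degree_le k).subset fun m hm => le_of_eq hm.1

lemma card_eq (J : Ideal (MvPolynomial (Fin (n + 1)) K)) (hSS : StronglyStable J)
    (hSat : Saturated J) (d : ℕ) :
    (SdSet J d).ncard = ∑ k ∈ Finset.range (d + 1), (BkSet J k).ncard := by
  classical
  rw [Set.ncard_eq_toFinset_card _ (sd_finite J d)]
  have hsum : ∑ k ∈ Finset.range (d + 1), (BkSet J k).ncard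
      = ∑ k ∈ Finset.range (d + 1), ((bk_finite J k).toFinset).card := by
    refine Finset.sum_congr rfl fun k _ => ?_
    rw [Set.ncard_eq_toFinset_card _ (bk_finite J k)]
  rw [hsum, ← Finset.card_sigma]
  refine Finset.card_bij'
    (fun m _ => ⟨d - m (Fin.last n), m.erase (Fin.last n)⟩)
    (fun p _ => p.2 + Finsupp.single (Fin.last n) (d - p.1)) ?_ ?_ ?_ ?_
  · intro m hm
    rw [Set.Finite.mem_toFinset] at hm
    obtain ⟨hdeg, hmem⟩ := hm
    have hdecomp : m.erase (Fin.last n) + Finsupp.single (Fin.last n) (m (Fin.last n)) = m :=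
      Finsupp.erase_add_single _ _
    have hle : m (Fin.last n) ≤ d := hdeg ▸ Finsupp.le_degree _ m
    have hdeg2 : (m.erase (Fin.last n)).degree = d - m (Fin.last n) := by
      have := degree_add (m.erase (Fin.last n)) (Finsupp.single (Fin.last n) (m (Fin.last n)))
      rw [hdecomp, hdeg, degree_single] at this
      omega
    simp only [Finset.mem_sigma, Finset.mem_range, Set.Finite.mem_toFinset]
    refine ⟨by omega, hdeg2, Finsupp.erase_same, ?_⟩
    exact bar_mem hSS hSat _ _ (by rwa [hdecomp])
  · rintro ⟨k, mb⟩ hp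
    simp only [Finset.mem_sigma, Finset.mem_range, Set.Finite.mem_toFinset] at hp
    obtain ⟨hk, hdeg, hL, hmem⟩ := hp
    dsimp only
    rw [Set.Finite.mem_toFinset]
    constructor
    · rw [degree_add, hdeg, degree_single]
      omega
    · exact mem_of_bar _ _ hmem
  · intro m hm
    rw [Set.Finite.mem_toFinset] at hm
    have hle : m (Fin.last n) ≤ d := hm.1 ▸ Finsupp.le_degree _ m
    dsimp only
    rw [Nat.sub_sub_self hle]
    exact Finsupp.erase_add_single _ _
  · rintro ⟨k, mb⟩ hp
    simp only [Finset.mem_sigma, Finset.mem_range, Set.Finite.mem_toFinset] at hp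
    obtain ⟨hk, hdeg, hL, hmem⟩ := hp
    dsimp only
    have happ : (mb + Finsupp.single (Fin.last n) (d - k)) (Fin.last n) = d - k := by
      rw [Finsupp.add_apply, hL, Finsupp.single_eq_same, zero_add]
    refine Sigma.ext ?_ (heq_of_eq ?_)
    · simp only [happ]
      omega
    · simp only
      rw [Finsupp.erase_add, Finsupp.erase_single, add_zero]
      ext a
      rcases eq_or_ne a (Fin.last n) with rfl | ha
      · rw [Finsupp.erase_same, hL]
      · rw [Finsupp.erase_ne ha]

end StmtAux

/-- For a saturated strongly stable ideal `J` in `K[x_1,…,x_{n+1}]`,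
`dim_K J_d = ∑_{k=0}^{d} dim_K J̄_k` for all `d ≥ 0`. -/
theorem stmt_1 {n : ℕ} {K : Type} [Field K]
    (J : Ideal (MvPolynomial (Fin (n + 1)) K))
    (hSS : StronglyStable J) (hSat : Saturated J) :
    ∀ d : ℕ, Module.finrank K (gradedPiece J d) =
      ∑ k ∈ Finset.range (d + 1), Module.finrank K (gradedPieceBar J k) := by
  intro d
  rw [StmtAux.gradedPiece_eq J hSS.1 d,
    StmtAux.finrank_span_monomials _ (StmtAux.sd_finite J d),
    StmtAux.card_eq J hSS hSat d]
  refine Finset.sum_congr rfl fun k _ => ?_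
  rw [StmtAux.gradedPieceBar_eq J hSS.1 k,
    StmtAux.finrank_span_monomials _ (StmtAux.bk_finite J k)]
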